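/- Tsuji's identity: Let D be a design with n blocks of size k on n symbols, each symbol occurring in exactly k blocks. Let l_{p,q} be the number of blocks containing both symbols p and q, and m_{i,j} the size of the intersection of blocks i and j, and set λ = k(k−1)/(n−1) (as a rational number). Then Σ_{p<q} (l_{p,q} − λ)² = Σ_{i<j} [ m_{i,j}² − (1 + 2(k−1)²/(n−2))·m_{i,j} + (k(k−1)/(n−1))·(1 − 2(k−1)/(n−2) + n·k(k−1)/((n−1)(n−2))) ], where the first sum ranges over 2-subsets of symbols and the second over 2-subsets of blocks. -/
import Mathlib

open Finset

lemma tsuji_pair_sum {n : ℕ} (f : Fin n → Fin n → ℚ) (hsymm : ∀ p q, f p q = f q p) :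
    2 * ∑ p ∈ Finset.univ.filter (fun p : Fin n × Fin n => p.1 < p.2), f p.1 p.2
    = (∑ p, ∑ q, f p q) - ∑ p, f p p := by
  have h2 := Finset.sum_filter_add_sum_filter_not (Finset.univ : Finset (Fin n × Fin n))
    (fun p => p.1 < p.2) (fun p => f p.1 p.2)
  have h3 := Finset.sum_filter_add_sum_filter_not
    (Finset.univ.filter (fun p : Fin n × Fin n => ¬ p.1 < p.2))
    (fun p => p.2 < p.1) (fun p => f p.1 p.2)
  have hgt : ∑ p ∈ (Finset.univ.filter (fun p : Fin n × Fin n => ¬ p.1 < p.2)).filter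
      (fun p => p.2 < p.1), f p.1 p.2
      = ∑ p ∈ Finset.univ.filter (fun p : Fin n × Fin n => p.1 < p.2), f p.1 p.2 := by
    rw [Finset.filter_filter]
    apply Finset.sum_nbij' (i := Prod.swap) (j := Prod.swap)
    · intro a ha; simp at ha ⊢; exact ha.2
    · intro a ha; simp at ha ⊢; exact ⟨le_of_lt ha, ha⟩
    · intro a _; rfl
    · intro a _; rfl
    · intro a _; exact hsymm _ _
  have hdiag : ∑ p ∈ (Finset.univ.filter (fun p : Fin n × Fin n => ¬ p.1 < p.2)).filter
      (fun p => ¬ p.2 < p.1), f p.1 p.2 = ∑ p, f p p := by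
    rw [Finset.filter_filter]
    apply Finset.sum_nbij' (i := fun p => p.1) (j := fun p => (p, p))
    · intro a _; exact Finset.mem_univ _
    · intro a _; simp
    · intro a ha; simp at ha; have : a.1 = a.2 := le_antisymm ha.2 ha.1; exact Prod.ext rfl this
    · intro a _; rfl
    · intro a ha; simp at ha; have : a.1 = a.2 := le_antisymm ha.2 ha.1; rw [this]
  have h1 : ∑ p, ∑ q, f p q = ∑ p ∈ (Finset.univ : Finset (Fin n × Fin n)), f p.1 p.2 := by
    rw [← Finset.univ_product_univ, Finset.sum_product]
  linarith

lemma tsuji_ind_card {n : ℕ} (B : Fin n → Finset (Fin n)) (p q : Fin n) :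
    ((Finset.univ.filter fun i => p ∈ B i ∧ q ∈ B i).card : ℚ)
      = ∑ i, (if p ∈ B i then (1:ℚ) else 0) * (if q ∈ B i then (1:ℚ) else 0) := by
  rw [Finset.card_filter]
  push_cast
  exact Finset.sum_congr rfl fun i _ => by
    by_cases h1 : p ∈ B i <;> by_cases h2 : q ∈ B i <;> simp [h1, h2]

lemma tsuji_inter_card {n : ℕ} (B : Fin n → Finset (Fin n)) (i j : Fin n) :
    ((B i ∩ B j).card : ℚ)
      = ∑ p, (if p ∈ B i then (1:ℚ) else 0) * (if p ∈ B j then (1:ℚ) else 0) := by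
  have h : B i ∩ B j = Finset.univ.filter fun p => p ∈ B i ∧ p ∈ B j := by
    ext p; simp
  rw [h, Finset.card_filter]
  push_cast
  exact Finset.sum_congr rfl fun p _ => by
    by_cases h1 : p ∈ B i <;> by_cases h2 : p ∈ B j <;> simp [h1, h2]

/-- Tsuji's identity relating covering numbers and block intersection numbers
for an equireplicate symmetric design. -/
theorem tsuji_identity (n k : ℕ) (hn : 3 ≤ n)
    (B : Fin n → Finset (Fin n))
    (hsize : ∀ i, (B i).card = k)
    (hrep : ∀ s : Fin n, (Finset.univ.filter fun i => s ∈ B i).card = k) :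
    (∑ p ∈ Finset.univ.filter (fun p : Fin n × Fin n => p.1 < p.2),
        (((Finset.univ.filter fun i => p.1 ∈ B i ∧ p.2 ∈ B i).card : ℚ)
          - (k : ℚ) * ((k : ℚ) - 1) / ((n : ℚ) - 1)) ^ 2)
      =
    (∑ p ∈ Finset.univ.filter (fun p : Fin n × Fin n => p.1 < p.2),
        (((B p.1 ∩ B p.2).card : ℚ) ^ 2
          - (1 + 2 * ((k : ℚ) - 1) ^ 2 / ((n : ℚ) - 2)) * ((B p.1 ∩ B p.2).card : ℚ)
          + ((k : ℚ) * ((k : ℚ) - 1) / ((n : ℚ) - 1))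
            * (1 - 2 * ((k : ℚ) - 1) / ((n : ℚ) - 2)
               + (n : ℚ) * (k : ℚ) * ((k : ℚ) - 1) / (((n : ℚ) - 1) * ((n : ℚ) - 2))))) := by
  have hn3 : (3:ℚ) ≤ (n:ℚ) := by exact_mod_cast hn
  have hn1 : (n:ℚ) - 1 ≠ 0 := by intro h; linarith [h]
  have hn2 : (n:ℚ) - 2 ≠ 0 := by intro h; linarith [h]
  set a : Fin n → Fin n → ℚ := fun i p => if p ∈ B i then (1:ℚ) else 0 with hadef
  set l : Fin n → Fin n → ℚ := fun p q =>
    ((Finset.univ.filter fun i => p ∈ B i ∧ q ∈ B i).card : ℚ) with hldef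
  set m : Fin n → Fin n → ℚ := fun i j => ((B i ∩ B j).card : ℚ) with hmdef
  have hl : ∀ p q, l p q = ∑ i, a i p * a i q := fun p q => tsuji_ind_card B p q
  have hm : ∀ i j, m i j = ∑ p, a i p * a j p := fun i j => tsuji_inter_card B i j
  have hrow : ∀ i, ∑ p, a i p = (k:ℚ) := by
    intro i
    have h : ∑ p, a i p = ((Finset.univ.filter fun p => p ∈ B i).card : ℚ) := by
      rw [Finset.card_filter]; push_cast; rfl
    rw [h, Finset.filter_univ_mem, hsize]
  have hcol : ∀ p, ∑ i, a i p = (k:ℚ) := by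
    intro p
    have h : ∑ i, a i p = ((Finset.univ.filter fun i => p ∈ B i).card : ℚ) := by
      rw [Finset.card_filter]; push_cast; rfl
    rw [h, hrep]
  -- symmetry
  have hlsym : ∀ p q, l p q = l q p := fun p q => by
    rw [hl, hl]; exact Finset.sum_congr rfl fun i _ => mul_comm _ _
  have hmsym : ∀ i j, m i j = m j i := fun i j => by
    rw [hm, hm]; exact Finset.sum_congr rfl fun p _ => mul_comm _ _
  -- diagonal values
  have hldiag : ∀ p, l p p = (k:ℚ) := by
    intro p
    rw [hl]
    calc ∑ i, a i p * a i p = ∑ i, a i p := Finset.sum_congr rfl fun i _ => by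
          by_cases h : p ∈ B i <;> simp [hadef, h]
    _ = (k:ℚ) := hcol p
  have hmdiag : ∀ i, m i i = (k:ℚ) := by
    intro i; rw [hmdef]; simp only [Finset.inter_self]; exact_mod_cast congrArg Nat.cast (hsize i)
  -- full double sums
  have hsum_l : ∑ p, ∑ q, l p q = (n:ℚ) * ((k:ℚ) * (k:ℚ)) := by
    calc ∑ p, ∑ q, l p q = ∑ p, ∑ q, ∑ i, a i p * a i q := by
          exact Finset.sum_congr rfl fun p _ => Finset.sum_congr rfl fun q _ => hl p q
    _ = ∑ p, ∑ i, ∑ q, a i p * a i q := Finset.sum_congr rfl fun p _ => Finset.sum_comm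
    _ = ∑ i, ∑ p, ∑ q, a i p * a i q := Finset.sum_comm
    _ = ∑ i, (∑ p, a i p) * (∑ q, a i q) := Finset.sum_congr rfl fun i _ => by
          rw [Finset.sum_mul_sum]
    _ = ∑ _i : Fin n, (k:ℚ) * (k:ℚ) := Finset.sum_congr rfl fun i _ => by rw [hrow]
    _ = (n:ℚ) * ((k:ℚ) * (k:ℚ)) := by
          rw [Finset.sum_const, Finset.card_univ, Fintype.card_fin, nsmul_eq_mul]
  have hsum_m : ∑ i, ∑ j, m i j = (n:ℚ) * ((k:ℚ) * (k:ℚ)) := by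
    calc ∑ i, ∑ j, m i j = ∑ i, ∑ j, ∑ p, a i p * a j p := by
          exact Finset.sum_congr rfl fun i _ => Finset.sum_congr rfl fun j _ => hm i j
    _ = ∑ i, ∑ p, ∑ j, a i p * a j p := Finset.sum_congr rfl fun i _ => Finset.sum_comm
    _ = ∑ p, ∑ i, ∑ j, a i p * a j p := Finset.sum_comm
    _ = ∑ p, (∑ i, a i p) * (∑ j, a j p) := Finset.sum_congr rfl fun p _ => by
          rw [Finset.sum_mul_sum]
    _ = ∑ _p : Fin n, (k:ℚ) * (k:ℚ) := Finset.sum_congr rfl fun p _ => by rw [hcol]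
    _ = (n:ℚ) * ((k:ℚ) * (k:ℚ)) := by
          rw [Finset.sum_const, Finset.card_univ, Fintype.card_fin, nsmul_eq_mul]
  -- sum of squares identity
  have hsum_sq : ∑ p, ∑ q, (l p q)^2 = ∑ i, ∑ j, (m i j)^2 := by
    calc ∑ p, ∑ q, (l p q)^2
        = ∑ p, ∑ q, ∑ i, ∑ j, (a i p * a i q) * (a j p * a j q) := by
          refine Finset.sum_congr rfl fun p _ => Finset.sum_congr rfl fun q _ => ?_
          rw [hl, sq, Finset.sum_mul_sum]
    _ = ∑ p, ∑ i, ∑ q, ∑ j, (a i p * a i q) * (a j p * a j q) :=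
          Finset.sum_congr rfl fun p _ => Finset.sum_comm
    _ = ∑ i, ∑ p, ∑ q, ∑ j, (a i p * a i q) * (a j p * a j q) := Finset.sum_comm
    _ = ∑ i, ∑ p, ∑ j, ∑ q, (a i p * a i q) * (a j p * a j q) :=
          Finset.sum_congr rfl fun i _ => Finset.sum_congr rfl fun p _ => Finset.sum_comm
    _ = ∑ i, ∑ j, ∑ p, ∑ q, (a i p * a i q) * (a j p * a j q) :=
          Finset.sum_congr rfl fun i _ => Finset.sum_comm
    _ = ∑ i, ∑ j, ∑ p, ∑ q, (a i p * a j p) * (a i q * a j q) := by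
          refine Finset.sum_congr rfl fun i _ => Finset.sum_congr rfl fun j _ =>
            Finset.sum_congr rfl fun p _ => Finset.sum_congr rfl fun q _ => by ring
    _ = ∑ i, ∑ j, (∑ p, a i p * a j p) * (∑ q, a i q * a j q) := by
          refine Finset.sum_congr rfl fun i _ => Finset.sum_congr rfl fun j _ => ?_
          rw [Finset.sum_mul_sum]
    _ = ∑ i, ∑ j, (m i j)^2 := by
          refine Finset.sum_congr rfl fun i _ => Finset.sum_congr rfl fun j _ => ?_
          rw [hm, sq]
  -- triangle sums via pair_sum
  have E1 := tsuji_pair_sum l hlsym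
  have E2 := tsuji_pair_sum (fun p q => (l p q)^2) (fun p q => by simp only [hlsym p q])
  have E3 := tsuji_pair_sum m hmsym
  have E4 := tsuji_pair_sum (fun p q => (m p q)^2) (fun p q => by simp only [hmsym p q])
  have E5 := tsuji_pair_sum (n := n) (fun _ _ => (1:ℚ)) (fun _ _ => rfl)
  beta_reduce at E2 E4 E5
  rw [hsum_l] at E1
  rw [hsum_m] at E3
  have hdl : ∑ p, l p p = (n:ℚ) * (k:ℚ) := by
    calc ∑ p, l p p = ∑ _p : Fin n, (k:ℚ) := Finset.sum_congr rfl fun p _ => hldiag p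
    _ = (n:ℚ) * (k:ℚ) := by rw [Finset.sum_const, Finset.card_univ, Fintype.card_fin, nsmul_eq_mul]
  have hdm : ∑ i, m i i = (n:ℚ) * (k:ℚ) := by
    calc ∑ i, m i i = ∑ _i : Fin n, (k:ℚ) := Finset.sum_congr rfl fun i _ => hmdiag i
    _ = (n:ℚ) * (k:ℚ) := by rw [Finset.sum_const, Finset.card_univ, Fintype.card_fin, nsmul_eq_mul]
  have hdl2 : ∑ p, (l p p)^2 = (n:ℚ) * (k:ℚ)^2 := by
    calc ∑ p, (l p p)^2 = ∑ _p : Fin n, (k:ℚ)^2 := Finset.sum_congr rfl fun p _ => by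
          rw [hldiag]
    _ = (n:ℚ) * (k:ℚ)^2 := by rw [Finset.sum_const, Finset.card_univ, Fintype.card_fin, nsmul_eq_mul]
  have hdm2 : ∑ i, (m i i)^2 = (n:ℚ) * (k:ℚ)^2 := by
    calc ∑ i, (m i i)^2 = ∑ _i : Fin n, (k:ℚ)^2 := Finset.sum_congr rfl fun i _ => by
          rw [hmdiag]
    _ = (n:ℚ) * (k:ℚ)^2 := by rw [Finset.sum_const, Finset.card_univ, Fintype.card_fin, nsmul_eq_mul]
  rw [hdl] at E1; rw [hdm] at E3
  rw [hdl2] at E2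
  rw [hsum_sq] at E2
  rw [show (∑ p : Fin n, m p p ^ 2) = (n:ℚ) * (k:ℚ)^2 from hdm2] at E4
  have hNcount : ∑ p : Fin n, ∑ q : Fin n, (1:ℚ) = (n:ℚ) * (n:ℚ) := by
    simp [Finset.sum_const, Finset.card_univ, mul_comm]
  have hNdiag : ∑ p : Fin n, (1:ℚ) = (n:ℚ) := by
    simp [Finset.sum_const, Finset.card_univ]
  rw [hNcount, hNdiag] at E5
  -- abbreviate triangle set
  set T := Finset.univ.filter (fun p : Fin n × Fin n => p.1 < p.2) with hT
  set lam : ℚ := (k : ℚ) * ((k : ℚ) - 1) / ((n : ℚ) - 1) with hlam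
  set A : ℚ := 1 + 2 * ((k : ℚ) - 1) ^ 2 / ((n : ℚ) - 2) with hA
  set C : ℚ := ((k : ℚ) * ((k : ℚ) - 1) / ((n : ℚ) - 1))
            * (1 - 2 * ((k : ℚ) - 1) / ((n : ℚ) - 2)
               + (n : ℚ) * (k : ℚ) * ((k : ℚ) - 1) / (((n : ℚ) - 1) * ((n : ℚ) - 2))) with hC
  have LHS_eq : ∑ p ∈ T, (l p.1 p.2 - lam)^2
      = (∑ p ∈ T, (l p.1 p.2)^2) - 2*lam*(∑ p ∈ T, l p.1 p.2) + lam^2 * (∑ p ∈ T, (1:ℚ)) := by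
    rw [Finset.mul_sum, Finset.mul_sum, ← Finset.sum_sub_distrib, ← Finset.sum_add_distrib]
    exact Finset.sum_congr rfl fun p _ => by ring
  have RHS_eq : ∑ p ∈ T, ((m p.1 p.2)^2 - A * m p.1 p.2 + C)
      = (∑ p ∈ T, (m p.1 p.2)^2) - A*(∑ p ∈ T, m p.1 p.2) + C * (∑ p ∈ T, (1:ℚ)) := by
    rw [Finset.mul_sum, Finset.mul_sum, ← Finset.sum_sub_distrib, ← Finset.sum_add_distrib]
    exact Finset.sum_congr rfl fun p _ => by ring
  show ∑ p ∈ T, (l p.1 p.2 - lam)^2 = ∑ p ∈ T, ((m p.1 p.2)^2 - A * m p.1 p.2 + C)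
  rw [LHS_eq, RHS_eq]
  have hSl : ∑ p ∈ T, l p.1 p.2 = ((n:ℚ) * ((k:ℚ)*(k:ℚ)) - (n:ℚ)*(k:ℚ))/2 := by linarith
  have hSm : ∑ p ∈ T, m p.1 p.2 = ((n:ℚ) * ((k:ℚ)*(k:ℚ)) - (n:ℚ)*(k:ℚ))/2 := by linarith
  have hN : ∑ p ∈ T, (1:ℚ) = ((n:ℚ)*(n:ℚ) - (n:ℚ))/2 := by linarith
  have hSq : ∑ p ∈ T, (l p.1 p.2)^2 = ∑ p ∈ T, (m p.1 p.2)^2 := by linarith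
  rw [hSl, hSm, hN, hSq, hlam, hA, hC]
  field_simp
  ring
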